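/- arXiv:2505.02495 — 3 statements merged into one kernel-verified Lean document; each statement's English description precedes it below -/
import Mathlib

section
/- Let J ∈ \mathbb{R}^{n×n}, let E ⊆ \mathbb{R}^n be a subspace with orthogonal projection P_E, let C ∈ \mathbb{R}^{n×p}. Suppose: (i) Jᵀ d = d for all d ∈ null(Cᵀ) ∩ E; (ii) J C = 0; (iii) J w = w for all w ∈ E^⊥; (iv) Jᵀ d ∈ null(Cᵀ) for all d ∈ \mathbb{R}^n; (v) J E^⊥ ⊆ E^⊥ and J(range(C)) = {0}. Then P_E J² = P_E J. -/
/-- Abstract form of Lemma 3.5 (idempotency on `E`): with `J = ∇A(x)`,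
`C = ∇c(x)`, `E` the direction subspace of `aff(X)` and `P_E` the orthogonal
projection onto `E`, the stated hypotheses give `P_E J² = P_E J`. -/
theorem stmt_7 {n p : ℕ}
    (J : EuclideanSpace ℝ (Fin n) →ₗ[ℝ] EuclideanSpace ℝ (Fin n))
    (C : EuclideanSpace ℝ (Fin p) →ₗ[ℝ] EuclideanSpace ℝ (Fin n))
    (E : Submodule ℝ (EuclideanSpace ℝ (Fin n)))
    -- (i) Jᵀ d = d for all d ∈ null(Cᵀ) ∩ E
    (h1 : ∀ d, LinearMap.adjoint C d = 0 → d ∈ E → LinearMap.adjoint J d = d)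
    -- (ii) J C = 0
    (h2 : ∀ w, J (C w) = 0)
    -- (iii) J w = w for all w ∈ Eᗮ
    (h3 : ∀ w ∈ Eᗮ, J w = w)
    -- (iv) Jᵀ d ∈ null(Cᵀ) for all d
    (h4 : ∀ d, LinearMap.adjoint C (LinearMap.adjoint J d) = 0)
    -- (v) J Eᗮ ⊆ Eᗮ and J (range C) = {0}
    (h5 : (∀ w ∈ Eᗮ, J w ∈ Eᗮ) ∧ ∀ u ∈ LinearMap.range C, J u = 0) :
    ∀ v, E.orthogonalProjectionOnto (J (J v)) = E.orthogonalProjectionOnto (J v) := by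
  intro v
  -- Key: for e ∈ E, Jᵀ e ∈ E.
  have hJTE : ∀ e ∈ E, LinearMap.adjoint J e ∈ E := by
    intro e he
    rw [← E.orthogonal_orthogonal, Submodule.mem_orthogonal]
    intro w hw
    rw [real_inner_comm, LinearMap.adjoint_inner_left]
    exact (Submodule.mem_orthogonal' _ _).mp (E.le_orthogonal_orthogonal he) _ (h5.1 w hw)
  -- Hence Jᵀ (Jᵀ e) = Jᵀ e for e ∈ E.
  have hfix : ∀ e ∈ E, LinearMap.adjoint J (LinearMap.adjoint J e) = LinearMap.adjoint J e := by
    intro e he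
    exact h1 _ (h4 e) (hJTE e he)
  -- J (J v) - J v ∈ Eᗮ
  have hmem : J (J v) - J v ∈ Eᗮ := by
    rw [Submodule.mem_orthogonal' _ _]
    intro e he
    rw [inner_sub_left, ← LinearMap.adjoint_inner_right J (J v) e,
      ← LinearMap.adjoint_inner_right J v e, ← LinearMap.adjoint_inner_right J v,
      hfix e he]
    ring
  have := Submodule.orthogonalProjectionOnto_apply_of_mem_orthogonal hmem
  rw [map_sub] at this
  exact sub_eq_zero.mp this
end

section
/- Let J ∈ \mathbb{R}^{n×n}, C ∈ \mathbb{R}^{n×p}, E ⊆ \mathbb{R}^n a subspace, and N ⊆ \mathbb{R}^n a closed convex cone with lin(N) = E^⊥. Suppose J C = 0, J w = w for all w ∈ N, and Jᵀ d = d for all d ∈ null(Cᵀ) ∩ E, and Jᵀ(\mathbb{R}^n) ⊆ null(Cᵀ). Then for d ∈ \mathbb{R}^n: 0 ∈ J d + N if and only if 0 ∈ d + range(C) + N. -/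
/-- Abstract form of Lemma 3.4: with `J = ∇A(x)`, `C = ∇c(x)`, `N = N_X(x)` a closed
convex cone with `lin(N) = N ∩ (-N) = Eᗮ`, and the stated hypotheses,
`0 ∈ J d + N` iff `0 ∈ d + range(C) + N`. -/
theorem stmt_8 {n p : ℕ}
    (J : EuclideanSpace ℝ (Fin n) →ₗ[ℝ] EuclideanSpace ℝ (Fin n))
    (C : EuclideanSpace ℝ (Fin p) →ₗ[ℝ] EuclideanSpace ℝ (Fin n))
    (E : Submodule ℝ (EuclideanSpace ℝ (Fin n)))
    (N : Set (EuclideanSpace ℝ (Fin n)))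
    (hNcl : IsClosed N) (hNconv : Convex ℝ N)
    (hNcone : ∀ t : ℝ, 0 ≤ t → ∀ v ∈ N, t • v ∈ N)
    (hlinN : N ∩ (-N) = (Eᗮ : Set (EuclideanSpace ℝ (Fin n))))
    (hJC : ∀ w, J (C w) = 0)
    (hJN : ∀ w ∈ N, J w = w)
    (hJadj : ∀ d, LinearMap.adjoint C d = 0 → d ∈ E → LinearMap.adjoint J d = d)
    (hJrange : ∀ d, LinearMap.adjoint C (LinearMap.adjoint J d) = 0) :
    ∀ d, (∃ v ∈ N, J d + v = 0) ↔
      (∃ w ∈ LinearMap.range C, ∃ v ∈ N, d + w + v = 0) := by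
  classical
  -- `Eᗮ ⊆ N`
  have hEperpN : ∀ e ∈ Eᗮ, e ∈ N := by
    intro e he
    have : e ∈ N ∩ (-N) := by rw [hlinN]; exact he
    exact this.1
  -- `N` is closed under addition
  have hadd : ∀ v ∈ N, ∀ w ∈ N, v + w ∈ N := by
    intro v hv w hw
    have h := hNconv hv hw (by norm_num : (0:ℝ) ≤ 1/2)
      (by norm_num : (0:ℝ) ≤ 1/2) (by norm_num : (1/2:ℝ) + 1/2 = 1)
    have h2 := hNcone 2 (by norm_num) _ h
    have : (2:ℝ) • ((1/2:ℝ) • v + (1/2:ℝ) • w) = v + w := by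
      rw [smul_add, smul_smul, smul_smul]; norm_num
    rwa [this] at h2
  -- the key subspace
  set F : Submodule ℝ (EuclideanSpace ℝ (Fin n)) :=
    LinearMap.ker (LinearMap.adjoint C) ⊓ E with hF
  have hFeq : F = (LinearMap.range C ⊔ Eᗮ)ᗮ := by
    ext u
    rw [← Submodule.inf_orthogonal]
    constructor
    · rintro ⟨hu1, hu2⟩
      simp only [SetLike.mem_coe] at hu1 hu2 ⊢
      refine ⟨?_, Submodule.le_orthogonal_orthogonal E hu2⟩
      show u ∈ (LinearMap.range C)ᗮ
      rw [Submodule.mem_orthogonal]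
      rintro x ⟨w, rfl⟩
      have : LinearMap.adjoint C u = 0 := hu1
      calc (inner ℝ (C w) u : ℝ) = inner ℝ w (LinearMap.adjoint C u) := by
            rw [LinearMap.adjoint_inner_right]
        _ = 0 := by rw [this]; exact inner_zero_right w
    · rintro ⟨hu1, hu2⟩
      simp only [SetLike.mem_coe] at hu1 hu2 ⊢
      refine ⟨?_, ?_⟩
      · show u ∈ LinearMap.ker (LinearMap.adjoint C)
        rw [LinearMap.mem_ker]
        apply ext_inner_right ℝ
        intro w
        rw [LinearMap.adjoint_inner_left, inner_zero_left]
        exact ((Submodule.mem_orthogonal' _ _).1 hu1 (C w) ⟨w, rfl⟩)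
      · rwa [Submodule.orthogonal_orthogonal] at hu2
  have hFperp : Fᗮ = LinearMap.range C ⊔ Eᗮ := by
    rw [hFeq, Submodule.orthogonal_orthogonal]
  -- `x - J x ∈ Fᗮ` for all `x`
  have hmem : ∀ x, x - J x ∈ Fᗮ := by
    intro x
    rw [Submodule.mem_orthogonal]
    intro u hu
    have h2 : LinearMap.adjoint J u = u := hJadj u hu.1 hu.2
    rw [inner_sub_right, ← LinearMap.adjoint_inner_left J, h2, sub_self]
  intro d
  constructor
  · rintro ⟨v, hv, hJdv⟩
    have hJd : J (-d) = v := by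
      have : J d = -v := by rwa [add_eq_zero_iff_eq_neg] at hJdv
      rw [map_neg, this, neg_neg]
    have hx : (-d) - v ∈ Fᗮ := by
      have := hmem (-d)
      rwa [hJd] at this
    rw [hFperp, Submodule.mem_sup] at hx
    obtain ⟨a, ha, b, hb, hab⟩ := hx
    refine ⟨a, ha, v + b, hadd v hv b (hEperpN b hb), ?_⟩
    have : d + a + (v + b) = d + (a + b) + v := by abel
    rw [this, hab]; abel
  · rintro ⟨w, ⟨y, rfl⟩, v, hv, h⟩
    refine ⟨v, hv, ?_⟩
    have := congrArg J h
    simpa [map_add, hJC y, hJN v hv] using this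
end

section
/- Let f be continuously differentiable on \mathbb{R}^n, A : \mathbb{R}^n → \mathbb{R}^n differentiable with A(x) = x, and c differentiable with c(x) = 0, at a point x ∈ K. Define h(y) = f(A(y)) + (β/2)‖c(y)‖². Suppose the equivalence: 0 ∈ ∇A(x)v + N_X(x) iff 0 ∈ v + range(∇c(x)) + N_X(x) holds for all v ∈ \mathbb{R}^n (as established by Lemma 3.4). Then x satisfies 0 ∈ ∇h(x) + N_X(x) if and only if 0 ∈ ∇f(x) + range(∇c(x)) + N_X(x). -/
open RealInnerProductSpace

/-- Theorem 3.1: at a feasible point `x` (`c(x) = 0`, `A(x) = x`, `x ∈ X`), assuming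
the equivalence of Lemma 3.4 for `∇A(x)` (the adjoint of the Fréchet derivative of `A`),
`x` is a first-order stationary point of the penalized problem
(`0 ∈ ∇h(x) + N_X(x)` with `h(y) = f(A(y)) + (β/2)‖c(y)‖²`) iff it is a first-order
stationary point of the original problem (`0 ∈ ∇f(x) + range(∇c(x)) + N_X(x)`). -/
theorem stmt_9 {n p : ℕ} (f : EuclideanSpace ℝ (Fin n) → ℝ)
    (A : EuclideanSpace ℝ (Fin n) → EuclideanSpace ℝ (Fin n))
    (c : EuclideanSpace ℝ (Fin n) → EuclideanSpace ℝ (Fin p))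
    (hf : ContDiff ℝ 1 f) (hA : Differentiable ℝ A) (hc : Differentiable ℝ c)
    (X : Set (EuclideanSpace ℝ (Fin n))) (hXcl : IsClosed X) (hXconv : Convex ℝ X)
    (x : EuclideanSpace ℝ (Fin n)) (hxX : x ∈ X) (hAx : A x = x) (hcx : c x = 0)
    (β : ℝ)
    (h : EuclideanSpace ℝ (Fin n) → ℝ)
    (hh : h = fun y => f (A y) + (β / 2) * ‖c y‖ ^ 2)
    (N : Set (EuclideanSpace ℝ (Fin n)))
    (hN : N = {v | ∀ y ∈ X, ⟪v, y - x⟫ ≤ 0})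
    (hequiv : ∀ v : EuclideanSpace ℝ (Fin n),
      (∃ u ∈ N, ContinuousLinearMap.adjoint (fderiv ℝ A x) v + u = 0) ↔
      (∃ w ∈ Set.range (ContinuousLinearMap.adjoint (fderiv ℝ c x)),
        ∃ u ∈ N, v + w + u = 0)) :
    (∃ u ∈ N, gradient h x + u = 0) ↔
      (∃ w ∈ Set.range (ContinuousLinearMap.adjoint (fderiv ℝ c x)),
        ∃ u ∈ N, gradient f x + w + u = 0) := by
  -- penalty term has zero derivative at x
  have hpen : HasFDerivAt (fun y => (β/2) * ‖c y‖^2)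
      (0 : EuclideanSpace ℝ (Fin n) →L[ℝ] ℝ) x := by
    have h1 : HasFDerivAt (fun y => (⟪c y, c y⟫ : ℝ))
        (0 : EuclideanSpace ℝ (Fin n) →L[ℝ] ℝ) x := by
      have := ((hc x).hasFDerivAt).inner ℝ ((hc x).hasFDerivAt)
      refine this.congr_fderiv ?_
      ext v
      simp [hcx]
    have := h1.const_mul (β/2)
    refine (this.congr_fderiv (smul_zero _)).congr_of_eventuallyEq
      (Filter.Eventually.of_forall fun y => ?_)
    simp only [real_inner_self_eq_norm_sq]
  have hfd : DifferentiableAt ℝ f x := (hf.differentiable one_ne_zero) x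
  have hcomp : HasFDerivAt (fun y => f (A y))
      ((fderiv ℝ f x).comp (fderiv ℝ A x)) x := by
    have hfA : HasFDerivAt f (fderiv ℝ f x) (A x) := by
      rw [hAx]; exact hfd.hasFDerivAt
    exact hfA.comp x (hA x).hasFDerivAt
  have hhd : HasFDerivAt h ((fderiv ℝ f x).comp (fderiv ℝ A x)) x := by
    rw [hh]
    exact (hcomp.add hpen).congr_fderiv (add_zero _)
  have hgrad : HasGradientAt h
      (ContinuousLinearMap.adjoint (fderiv ℝ A x) (gradient f x)) x := by
    rw [hasGradientAt_iff_hasFDerivAt]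
    refine hhd.congr_fderiv (Eq.symm ?_)
    ext v
    rw [InnerProductSpace.toDual_apply_apply, ContinuousLinearMap.adjoint_inner_left]
    simp only [ContinuousLinearMap.comp_apply]
    rw [gradient, InnerProductSpace.toDual_symm_apply]
  rw [hgrad.gradient]
  exact hequiv (gradient f x)
end
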